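/- Let A be an associative unital ring, M a left A-module, and 𝔯 = End_A(M)^op endowed with the finite topology. Then an element h ∈ 𝔯 belongs to the topological Jacobson radical 𝔥(𝔯) if and only if, for every element r ∈ 𝔯, the A-module endomorphism of M given by 1 − hr is a locally split monomorphism. -/

import Mathlib

open Filter MulOpposite

universe u

/-- The corner ring `eRe` of an idempotent `e` is a local ring: `e` is idempotent, nonzero,
and every element `exe` of the corner ring is invertible in `eRe` (with unit `e`),
or `e - exe` is. -/
def IsLocalIdempotent {R : Type*} [Ring R] (e : R) : Prop :=
  IsIdempotentElem e ∧ e ≠ 0 ∧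
    ∀ x : R,
      (∃ y : R, e * x * e * (e * y * e) = e ∧ e * y * e * (e * x * e) = e) ∨
      (∃ y : R, (e - e * x * e) * (e * y * e) = e ∧ e * y * e * (e - e * x * e) = e)

/-- Open right ideals form a base of neighborhoods of zero. -/
def IsRightLinearTopology (R : Type u) [Ring R] [TopologicalSpace R] : Prop :=
  ∀ s ∈ nhds (0 : R), ∃ I : Submodule Rᵐᵒᵖ R, IsOpen (I : Set R) ∧ (I : Set R) ⊆ s

/-- A topological ring is topologically semiperfect if there is a zero-convergent family of
pairwise orthogonal local idempotents summing to `1`. -/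
def IsTopSemiperfect (R : Type u) [Ring R] [TopologicalSpace R] : Prop :=
  ∃ (Z : Type u) (e : Z → R),
    Filter.Tendsto e Filter.cofinite (nhds 0) ∧
    (∀ z, IsLocalIdempotent (e z)) ∧
    (∀ z w, z ≠ w → e z * e w = 0) ∧
    HasSum e 1

/-- The topological Jacobson radical: the intersection of all open maximal right ideals. -/
def topJacobson (R : Type u) [Ring R] [TopologicalSpace R] : Set R :=
  ⋂ I ∈ {I : Submodule Rᵐᵒᵖ R | IsOpen (I : Set R) ∧ IsCoatom I}, (I : Set R)

/-- The abstract Jacobson radical: the intersection of all maximal right ideals. -/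
def absJacobson (R : Type u) [Ring R] : Set R :=
  ⋂ I ∈ {I : Submodule Rᵐᵒᵖ R | IsCoatom I}, (I : Set R)

/-- A right module is discrete if the annihilator of each element is open. -/
def IsDiscreteModule (R : Type u) [Ring R] [TopologicalSpace R]
    (N : Type u) [AddCommGroup N] [Module Rᵐᵒᵖ N] : Prop :=
  ∀ n : N, IsOpen {r : R | op r • n = 0}

/-- `N` has a projective cover in the category of all `R₀`-modules. -/
def HasProjCover (R₀ : Type u) [Ring R₀] (N : Type u) [AddCommGroup N] [Module R₀ N] : Prop :=
  ∃ (P : Type u) (_ : AddCommGroup P) (_ : Module R₀ P) (p : P →ₗ[R₀] N),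
    Module.Projective R₀ P ∧ Function.Surjective p ∧
      ∀ K : Submodule R₀ P, K ⊔ LinearMap.ker p = ⊤ → K = ⊤

/-- The finite topology on `End_A(M)^op`: the topology of pointwise convergence,
`M` being discrete; a base of neighborhoods of zero is given by the annihilators of
finite subsets of `M`. -/
def finiteTopologyEnd (A M : Type u) [Ring A] [AddCommGroup M] [Module A M] :
    TopologicalSpace (Module.End A M)ᵐᵒᵖ :=
  TopologicalSpace.induced (fun f (m : M) => f.unop m)
    (@Pi.topologicalSpace M (fun _ => M) (fun _ => ⊥))

/-- The topological Jacobson radical, as an additive subgroup. -/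
def topJacobsonAddSubgroup (R : Type u) [Ring R] [TopologicalSpace R] : AddSubgroup R :=
  ⨅ I ∈ {I : Submodule Rᵐᵒᵖ R | IsOpen (I : Set R) ∧ IsCoatom I}, I.toAddSubgroup
section Aux


variable (A M : Type u) [Ring A] [AddCommGroup M] [Module A M]

/-- The annihilator of a finite set of elements, as a right ideal of `End_A(M)^op`. -/
def annSubmodule (s : Finset M) :
    Submodule ((Module.End A M)ᵐᵒᵖ)ᵐᵒᵖ (Module.End A M)ᵐᵒᵖ where
  carrier := {f | ∀ x ∈ s, f.unop x = 0}
  add_mem' := fun {a b} ha hb x hx => by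
    simp [unop_add, ha x hx, hb x hx]
  zero_mem' := fun x hx => rfl
  smul_mem' := fun c f hf x hx => by
    show ((c • f).unop) x = 0
    rw [MulOpposite.smul_eq_mul_unop, unop_mul]
    simp [Module.End.mul_apply, hf x hx]

theorem isOpen_of_ann_subset (s : Finset M)
    (I : Submodule ((Module.End A M)ᵐᵒᵖ)ᵐᵒᵖ (Module.End A M)ᵐᵒᵖ)
    (hsub : ∀ f : (Module.End A M)ᵐᵒᵖ, (∀ x ∈ s, f.unop x = 0) → f ∈ I) :
    @IsOpen _ (finiteTopologyEnd A M) (I : Set (Module.End A M)ᵐᵒᵖ) := by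
  letI : TopologicalSpace (Module.End A M)ᵐᵒᵖ := finiteTopologyEnd A M
  letI : TopologicalSpace M := ⊥
  haveI : DiscreteTopology M := ⟨rfl⟩
  rw [isOpen_iff_forall_mem_open]
  intro f hf
  refine ⟨{g : (Module.End A M)ᵐᵒᵖ | ∀ x ∈ s, g.unop x = f.unop x}, ?_, ?_, ?_⟩
  · intro g hg
    have h1 : g - f ∈ I := hsub _ (fun x hx => by simp [unop_sub, hg x hx])
    have := I.add_mem h1 hf
    simpa using this
  · have heq : {g : (Module.End A M)ᵐᵒᵖ | ∀ x ∈ s, g.unop x = f.unop x}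
        = (fun (g : (Module.End A M)ᵐᵒᵖ) (m : M) => g.unop m) ⁻¹'
          (⋂ x ∈ s, Function.eval x ⁻¹' {f.unop x}) := by
      ext g
      simp [Function.eval]
    rw [heq]
    exact isOpen_induced (isOpen_biInter_finset fun x _ =>
      (continuous_apply x).isOpen_preimage _ (isOpen_discrete _))
  · intro x hx
    rfl

theorem exists_ann_subset
    (I : Submodule ((Module.End A M)ᵐᵒᵖ)ᵐᵒᵖ (Module.End A M)ᵐᵒᵖ)
    (hI : @IsOpen _ (finiteTopologyEnd A M) (I : Set (Module.End A M)ᵐᵒᵖ)) :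
    ∃ s : Finset M, ∀ f : (Module.End A M)ᵐᵒᵖ, (∀ x ∈ s, f.unop x = 0) → f ∈ I := by
  letI : TopologicalSpace (Module.End A M)ᵐᵒᵖ := finiteTopologyEnd A M
  letI : TopologicalSpace M := ⊥
  haveI : DiscreteTopology M := ⟨rfl⟩
  have h0 : (I : Set (Module.End A M)ᵐᵒᵖ) ∈ nhds (0 : (Module.End A M)ᵐᵒᵖ) :=
    hI.mem_nhds I.zero_mem
  rw [show nhds (0 : (Module.End A M)ᵐᵒᵖ) = @nhds _ (TopologicalSpace.induced
      (fun f (m : M) => f.unop m) (@Pi.topologicalSpace M (fun _ => M) (fun _ => ⊥))) 0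
      from rfl, nhds_induced] at h0
  obtain ⟨S, hS, hSsub⟩ := h0
  have hS' : S ∈ Filter.pi (fun (x : M) => pure (0 : M)) := by
    have : (nhds (fun m : M => ((0 : (Module.End A M)ᵐᵒᵖ).unop) m))
        = Filter.pi (fun (x : M) => pure (0 : M)) := by
      rw [nhds_pi]
      congr 1
      ext x
      simp [nhds_discrete]
    rwa [this] at hS
  rw [Filter.mem_pi'] at hS'
  obtain ⟨F, t, ht, htS⟩ := hS'
  refine ⟨F, fun f hf => ?_⟩
  apply hSsub
  apply htS
  intro x hx
  simp only [Set.mem_setOf_eq]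
  rw [hf x hx]
  exact ht x

theorem exists_coatom_ge
    (J : Submodule ((Module.End A M)ᵐᵒᵖ)ᵐᵒᵖ (Module.End A M)ᵐᵒᵖ) (hJ : J ≠ ⊤) :
    ∃ I, IsCoatom I ∧ J ≤ I := by
  haveI : IsCoatomic (Submodule ((Module.End A M)ᵐᵒᵖ)ᵐᵒᵖ (Module.End A M)ᵐᵒᵖ) := by
    apply CompleteLattice.coatomic_of_top_compact
    have htop : (⊤ : Submodule ((Module.End A M)ᵐᵒᵖ)ᵐᵒᵖ (Module.End A M)ᵐᵒᵖ)
        = Submodule.span _ {1} := by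
      symm
      rw [eq_top_iff]
      intro x _
      exact Submodule.mem_span_singleton.2 ⟨op x, by rw [op_smul_eq_mul, one_mul]⟩
    rw [htop]
    exact Submodule.singleton_span_isCompactElement 1
  exact (eq_top_or_exists_le_coatom J).resolve_left hJ

end Aux

theorem mem_topJacobson_iff_locally_split_mono
    (A : Type u) (M : Type u) [Ring A] [AddCommGroup M] [Module A M]
    (h : (Module.End A M)ᵐᵒᵖ) :
    letI : TopologicalSpace (Module.End A M)ᵐᵒᵖ := finiteTopologyEnd A M
    (h ∈ topJacobson (Module.End A M)ᵐᵒᵖ ↔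
      ∀ r : (Module.End A M)ᵐᵒᵖ, ∀ s : Finset M, ∃ g : M →ₗ[A] M,
        ∀ x ∈ s, g ((MulOpposite.unop (1 - h * r) : Module.End A M) x) = x) := by
  letI : TopologicalSpace (Module.End A M)ᵐᵒᵖ := finiteTopologyEnd A M
  simp only [topJacobson, Set.mem_iInter, Set.mem_setOf_eq, SetLike.mem_coe]
  constructor
  · -- forward: h in radical implies local splitting
    intro hmem r s
    set J : Submodule ((Module.End A M)ᵐᵒᵖ)ᵐᵒᵖ (Module.End A M)ᵐᵒᵖ :=
      Submodule.span _ {1 - h * r} ⊔ annSubmodule A M s with hJdef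
    have hJtop : J = ⊤ := by
      by_contra hJ
      obtain ⟨I, hIco, hJI⟩ := exists_coatom_ge A M J hJ
      have hIopen : @IsOpen _ (finiteTopologyEnd A M) (I : Set (Module.End A M)ᵐᵒᵖ) :=
        isOpen_of_ann_subset A M s I (fun f hf =>
          hJI (Submodule.mem_sup_right hf))
      have hhI : h ∈ I := hmem I ⟨hIopen, hIco⟩
      have h1 : (1 - h * r) ∈ I :=
        hJI (Submodule.mem_sup_left (Submodule.subset_span rfl))
      have h2 : h * r ∈ I := by
        have := I.smul_mem (op r) hhI
        rwa [op_smul_eq_mul] at this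
      have h3 : (1 : (Module.End A M)ᵐᵒᵖ) ∈ I := by
        have := I.add_mem h1 h2
        simpa using this
      refine hIco.1 ?_
      rw [eq_top_iff]
      intro x _
      have := I.smul_mem (op x) h3
      rwa [op_smul_eq_mul, one_mul] at this
    have h1J : (1 : (Module.End A M)ᵐᵒᵖ) ∈ J := hJtop ▸ Submodule.mem_top
    rw [hJdef, Submodule.mem_sup] at h1J
    obtain ⟨y, hy, b, hb, hyb⟩ := h1J
    rw [Submodule.mem_span_singleton] at hy
    obtain ⟨d, hd⟩ := hy
    refine ⟨d.unop.unop, fun x hx => ?_⟩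
    have hx1 : ((1 : (Module.End A M)ᵐᵒᵖ).unop) x = x := rfl
    rw [← hyb] at hx1
    rw [unop_add, ← hd, MulOpposite.smul_eq_mul_unop, unop_mul] at hx1
    have hb0 : (b.unop) x = 0 := hb x hx
    simpa [Module.End.mul_apply, hb0] using hx1
  · -- backward: local splitting implies h in radical
    intro hls I hI
    obtain ⟨hIopen, hIco⟩ := hI
    by_contra hh
    have hKtop : I ⊔ Submodule.span _ {h} = ⊤ := by
      refine hIco.2 _ (lt_of_le_of_ne le_sup_left fun e => hh ?_)
      rw [e]
      exact Submodule.mem_sup_right (Submodule.subset_span rfl)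
    have h1K : (1 : (Module.End A M)ᵐᵒᵖ) ∈ I ⊔ Submodule.span _ {h} :=
      hKtop ▸ Submodule.mem_top
    rw [Submodule.mem_sup] at h1K
    obtain ⟨i, hi, y, hy, hiy⟩ := h1K
    rw [Submodule.mem_span_singleton] at hy
    obtain ⟨d, hd⟩ := hy
    have hdmul : y = h * d.unop := by rw [← hd, MulOpposite.smul_eq_mul_unop]
    have hiI : (1 - h * d.unop) ∈ I := by
      have : i = 1 - h * d.unop := by rw [← hiy, hdmul, add_sub_cancel_right]
      rwa [← this]
    obtain ⟨F, hF⟩ := exists_ann_subset A M I hIopen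
    obtain ⟨g, hg⟩ := hls d.unop F
    have hw : (1 - (1 - h * d.unop) * op g) ∈ I := by
      apply hF
      intro x hx
      have hg' := hg x hx
      simp only [unop_sub, unop_one, unop_mul, unop_op, LinearMap.sub_apply,
        Module.End.mul_apply, Module.End.one_apply] at hg' ⊢
      rw [hg', sub_self]
    have hmulI : (1 - h * d.unop) * op g ∈ I := by
      have := I.smul_mem (op (op g)) hiI
      rwa [op_smul_eq_mul] at this
    have h1I : (1 : (Module.End A M)ᵐᵒᵖ) ∈ I := by
      have := I.add_mem hw hmulI
      simpa using this
    refine hIco.1 ?_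
    rw [eq_top_iff]
    intro x _
    have := I.smul_mem (op x) h1I
    rwa [op_smul_eq_mul, one_mul] at this
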